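/- Set p̂ := (μ−l)/(h−l), let C : [0,1] → [0,∞) be bounded, and let C̄ be an upper bound for C on [p̂−ε, p̂+ε]. Let M > 0 and ε > 0 satisfy ε ≤ p̂/2, ε ≤ (1−p̂)/2, ρ·ε ≤ 1, and ε < ((h−l)/σ)²·p̂²·(1−p̂)²·M / ( 32·(15M + C̄ + ρμ) ). Define r(q) := μ + M·( −ε/2 + (q − (p̂−ε))²/ε ). Then r''(q) = 2M/ε, and for every q ∈ [p̂−ε, p̂+ε] one has ρ·r(q) − (1/2)·((h−l)/σ)²·q²·(1−q)²·r''(q) + C(q) < 0. -/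

import Mathlib

set_option autoImplicit false
set_option maxHeartbeats 1000000

/-- With `p̂ = (μ−l)/(h−l)` and
`r(q) = μ + M(−ε/2 + (q − (p̂−ε))²/ε)`, under the stated smallness conditions on `ε`,
one has `r''(q) = 2M/ε` and
`ρ r(q) − ½((h−l)/σ)² q²(1−q)² r''(q) + C(q) < 0` for all `q ∈ [p̂−ε, p̂+ε]`. -/
theorem stmt_16 (l μ h ρ σ : ℝ)
    (hl : 0 < l) (hlμ : l < μ) (hμh : μ < h) (hρ : 0 < ρ) (hσ : 0 < σ)
    (phat : ℝ) (hphat : phat = (μ - l) / (h - l))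
    (M ε : ℝ) (hM : 0 < M) (hε : 0 < ε)
    (C : ℝ → ℝ) (Cbar : ℝ)
    (hC0 : ∀ q ∈ Set.Icc (0 : ℝ) 1, 0 ≤ C q)
    (hCbd : ∃ B : ℝ, ∀ q ∈ Set.Icc (0 : ℝ) 1, C q ≤ B)
    (hCbar : ∀ q ∈ Set.Icc (phat - ε) (phat + ε), C q ≤ Cbar)
    (hε1 : ε ≤ phat / 2) (hε2 : ε ≤ (1 - phat) / 2) (hε3 : ρ * ε ≤ 1)
    (hε4 : ε < ((h - l) / σ) ^ 2 * phat ^ 2 * (1 - phat) ^ 2 * M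
      / (32 * (15 * M + Cbar + ρ * μ)))
    (r : ℝ → ℝ)
    (hr : ∀ q : ℝ, r q = μ + M * (-ε / 2 + (q - (phat - ε)) ^ 2 / ε)) :
    (∀ q : ℝ, deriv (deriv r) q = 2 * M / ε)
    ∧ (∀ q ∈ Set.Icc (phat - ε) (phat + ε),
        ρ * r q - (1 / 2) * ((h - l) / σ) ^ 2 * q ^ 2 * (1 - q) ^ 2 * deriv (deriv r) q
          + C q < 0) := by
  have hrf : r = fun q => μ + M * (-ε / 2 + (q - (phat - ε)) ^ 2 / ε) := funext hr
  set a := phat - ε with ha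
  -- first derivative
  have hd1 : ∀ q : ℝ, HasDerivAt r (M * (2 * (q - a)) / ε) q := by
    intro q
    rw [hrf]
    have h1 : HasDerivAt (fun q : ℝ => q - a) 1 q := (hasDerivAt_id q).sub_const a
    have h2 : HasDerivAt (fun q : ℝ => (q - a) ^ 2) (2 * (q - a)) q := by
      have := h1.pow 2
      exact this.congr_deriv (by norm_num)
    have h3 := ((((h2.div_const ε).const_add (-ε / 2)).const_mul M).const_add μ)
    exact h3.congr_deriv (by ring)
  have hd1' : deriv r = fun q => M * (2 * (q - a)) / ε := funext fun q => (hd1 q).deriv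
  have hd2 : ∀ q : ℝ, deriv (deriv r) q = 2 * M / ε := by
    intro q
    rw [hd1']
    have h1 : HasDerivAt (fun q : ℝ => q - a) 1 q := (hasDerivAt_id q).sub_const a
    have h2 : HasDerivAt (fun q : ℝ => M * (2 * (q - a)) / ε) (M * (2 * 1) / ε) q :=
      ((h1.const_mul 2).const_mul M).div_const ε
    simpa [mul_comm] using h2.deriv
  refine ⟨hd2, ?_⟩
  -- basic facts
  have hhl : 0 < h - l := by linarith
  have hp0 : 0 < phat := by rw [hphat]; exact div_pos (by linarith) (by linarith)
  have hp1 : phat < 1 := by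
    rw [hphat, div_lt_one hhl]; linarith
  have hphatmem : phat ∈ Set.Icc (phat - ε) (phat + ε) := by
    constructor <;> linarith
  have hCbar0 : 0 ≤ Cbar :=
    le_trans (hC0 phat ⟨hp0.le, hp1.le⟩) (hCbar phat hphatmem)
  have hS : 0 < 15 * M + Cbar + ρ * μ := by
    have : 0 < ρ * μ := mul_pos hρ (by linarith)
    linarith
  set K := ((h - l) / σ) ^ 2 with hK
  have hK0 : 0 < K := by positivity
  have hε4' : ε * (32 * (15 * M + Cbar + ρ * μ)) < K * phat ^ 2 * (1 - phat) ^ 2 * M := by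
    rw [← lt_div_iff₀ (by positivity)]
    exact hε4
  intro q hq
  obtain ⟨hq1, hq2⟩ := hq
  rw [hd2 q, hr q]
  have hq0 : phat / 2 ≤ q := by linarith
  have hq1' : q ≤ (1 + phat) / 2 := by linarith
  have h1q : (1 - phat) / 2 ≤ 1 - q := by linarith
  have hCq : C q ≤ Cbar := hCbar q ⟨hq1, hq2⟩
  have hqa : 0 ≤ q - a := by rw [ha]; linarith
  have hqa2 : q - a ≤ 2 * ε := by rw [ha]; linarith
  have hsq : (q - a) ^ 2 ≤ 4 * ε ^ 2 := by nlinarith [hqa, hqa2]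
  -- lower bound on q^2 (1-q)^2
  have hq2lb : phat ^ 2 * (1 - phat) ^ 2 / 16 ≤ q ^ 2 * (1 - q) ^ 2 := by
    have hA : phat ^ 2 / 4 ≤ q ^ 2 := by
      have h := pow_le_pow_left₀ (by linarith : (0:ℝ) ≤ phat / 2) hq0 2
      calc phat ^ 2 / 4 = (phat / 2) ^ 2 := by ring
        _ ≤ q ^ 2 := h
    have hB : (1 - phat) ^ 2 / 4 ≤ (1 - q) ^ 2 := by
      have h := pow_le_pow_left₀ (by linarith : (0:ℝ) ≤ (1 - phat) / 2) h1q 2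
      calc (1 - phat) ^ 2 / 4 = ((1 - phat) / 2) ^ 2 := by ring
        _ ≤ (1 - q) ^ 2 := h
    have := mul_le_mul hA hB (by positivity) (by positivity)
    linarith
  -- key comparison of the diffusion term
  have hdiff : K * phat ^ 2 * (1 - phat) ^ 2 * M / (16 * ε)
      ≤ 1 / 2 * K * q ^ 2 * (1 - q) ^ 2 * (2 * M / ε) := by
    rw [div_le_iff₀ (by positivity)]
    have : 1 / 2 * K * q ^ 2 * (1 - q) ^ 2 * (2 * M / ε) * (16 * ε)
        = 16 * (K * M) * (q ^ 2 * (1 - q) ^ 2) := by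
      field_simp
    rw [this]
    have := mul_le_mul_of_nonneg_left hq2lb (by positivity : (0:ℝ) ≤ 16 * (K * M))
    linarith [this]
  have hdiff2 : 2 * (15 * M + Cbar + ρ * μ) < K * phat ^ 2 * (1 - phat) ^ 2 * M / (16 * ε) := by
    rw [lt_div_iff₀ (by positivity)]
    calc 2 * (15 * M + Cbar + ρ * μ) * (16 * ε)
        = ε * (32 * (15 * M + Cbar + ρ * μ)) := by ring
      _ < _ := hε4'
  -- bound the drift + cost part
  have hdrift : ρ * (μ + M * (-ε / 2 + (q - a) ^ 2 / ε)) + C q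
      ≤ ρ * μ + 4 * M + Cbar := by
    have hsqd : (q - a) ^ 2 / ε ≤ 4 * ε := by
      rw [div_le_iff₀ hε]
      calc (q - a) ^ 2 ≤ 4 * ε ^ 2 := hsq
        _ = 4 * ε * ε := by ring
    have hrq : ρ * (M * (-ε / 2 + (q - a) ^ 2 / ε)) ≤ 4 * M := by
      have h1 : M * (-ε / 2 + (q - a) ^ 2 / ε) ≤ M * (4 * ε) := by
        have : -ε / 2 + (q - a) ^ 2 / ε ≤ 4 * ε := by linarith
        exact mul_le_mul_of_nonneg_left this hM.le
      calc ρ * (M * (-ε / 2 + (q - a) ^ 2 / ε)) ≤ ρ * (M * (4 * ε)) := by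
            exact mul_le_mul_of_nonneg_left h1 hρ.le
        _ = 4 * M * (ρ * ε) := by ring
        _ ≤ 4 * M * 1 := by nlinarith
        _ = 4 * M := by ring
    linarith
  have hρμ : 0 < ρ * μ := mul_pos hρ (by linarith)
  linarith [hdiff, hdiff2, hdrift]
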